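/- Let c=(c_0,c_1,c_2,...) be a sequence of rationals and define α_m = c_{2m}+c_{2m+1} and β_m = c_{2m+1}·c_{2m+2} for all m≥0. Then for every n≥1, Dyck_n(c) = c_0 · Mot_{n-1}(α,β). -/

import Mathlib

/-- A step of a Motzkin path: up `(1,1)`, down `(1,-1)`, or horizontal `(1,0)`. -/
inductive MStep : Type
  | up : MStep
  | down : MStep
  | flat : MStep
  deriving DecidableEq

instance instFintypeMStep : Fintype MStep :=
  ⟨{MStep.up, MStep.down, MStep.flat}, fun x => by cases x <;> simp⟩

/-- The vertical displacement of a Motzkin step. -/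
def MStep.val : MStep → ℤ
  | .up => 1
  | .down => -1
  | .flat => 0

/-- The height of the path after its first `k` steps. -/
def mHeight (l : List MStep) (k : ℕ) : ℤ := ((l.take k).map MStep.val).sum

/-- A list of steps is a Motzkin path if it never goes below the x-axis and ends at height 0. -/
def IsMotzkin (l : List MStep) : Prop :=
  (∀ k : ℕ, 0 ≤ mHeight l k) ∧ mHeight l l.length = 0

/-- The weight of a Motzkin path w.r.t. `(b, lam)`: a factor `b i` for every horizontal step
of height `i` and a factor `lam i` for every down step of height `i` (the height of a step
being the `y`-coordinate of its ending point). -/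
def mWeight (b lam : ℕ → ℚ) (l : List MStep) : ℚ :=
  ∏ i ∈ Finset.range l.length,
    match l.getD i MStep.up with
    | .up => 1
    | .flat => b (mHeight l (i + 1)).toNat
    | .down => lam (mHeight l (i + 1)).toNat

open Classical in
/-- `Mot_n(b,lam)`: the sum of the weights of all Motzkin paths of length `n`. -/
noncomputable def motSum (n : ℕ) (b lam : ℕ → ℚ) : ℚ :=
  ∑ f : Fin n → MStep,
    if IsMotzkin (List.ofFn f) then mWeight b lam (List.ofFn f) else 0

/-- A step of a Dyck path: up `(1,1)` or down `(1,-1)`. -/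
inductive DStep : Type
  | up : DStep
  | down : DStep
  deriving DecidableEq

instance instFintypeDStep : Fintype DStep :=
  ⟨{DStep.up, DStep.down}, fun x => by cases x <;> simp⟩

/-- The vertical displacement of a Dyck step. -/
def DStep.val : DStep → ℤ
  | .up => 1
  | .down => -1

/-- The height of the path after its first `k` steps. -/
def dHeight (l : List DStep) (k : ℕ) : ℤ := ((l.take k).map DStep.val).sum

/-- A list of steps is a Dyck path if it never goes below the x-axis and ends at height 0. -/
def IsDyck (l : List DStep) : Prop :=
  (∀ k : ℕ, 0 ≤ dHeight l k) ∧ dHeight l l.length = 0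

/-- The weight of a Dyck path w.r.t. `c`: a factor `c i` for every down step of height `i`
(the height of a step being the `y`-coordinate of its ending point). -/
def dWeight (c : ℕ → ℚ) (l : List DStep) : ℚ :=
  ∏ i ∈ Finset.range l.length,
    match l.getD i DStep.up with
    | .up => 1
    | .down => c (dHeight l (i + 1)).toNat

open Classical in
/-- `Dyck_n(c)`: the sum of the weights of all Dyck paths of length `2n`. -/
noncomputable def dyckSum (n : ℕ) (c : ℕ → ℚ) : ℚ :=
  ∑ f : Fin (2 * n) → DStep,
    if IsDyck (List.ofFn f) then dWeight c (List.ofFn f) else 0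


/-! ### Auxiliary machinery -/

/-- Recursive weight of a Dyck-path segment starting at height `h`: combines the
"stays nonnegative, ends at 0" condition with the product of `c`-weights. -/
def dAux (c : ℕ → ℚ) : ℕ → List DStep → ℚ
  | h, [] => if h = 0 then 1 else 0
  | h, .up :: t => dAux c (h+1) t
  | 0, .down :: _ => 0
  | h+1, .down :: t => c h * dAux c h t

/-- Recursive weight of a Motzkin-path segment starting at height `h`. -/
def mAux (b lam : ℕ → ℚ) : ℕ → List MStep → ℚ
  | h, [] => if h = 0 then 1 else 0
  | h, .up :: t => mAux b lam (h+1) t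
  | h, .flat :: t => b h * mAux b lam h t
  | 0, .down :: _ => 0
  | h+1, .down :: t => lam h * mAux b lam h t

lemma dHeight_nil (k : ℕ) : dHeight [] k = 0 := by simp [dHeight]
lemma dHeight_zero (l : List DStep) : dHeight l 0 = 0 := rfl
lemma dHeight_cons (s : DStep) (t : List DStep) (k : ℕ) :
    dHeight (s::t) (k+1) = s.val + dHeight t k := by
  simp [dHeight, List.take_succ_cons]

lemma mHeight_nil (k : ℕ) : mHeight [] k = 0 := by simp [mHeight]
lemma mHeight_zero (l : List MStep) : mHeight l 0 = 0 := rfl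
lemma mHeight_cons (s : MStep) (t : List MStep) (k : ℕ) :
    mHeight (s::t) (k+1) = s.val + mHeight t k := by
  simp [mHeight, List.take_succ_cons]

lemma dcond_cons (h : ℤ) (hh : 0 ≤ h) (s : DStep) (t : List DStep) :
    (∀ k, 0 ≤ h + dHeight (s::t) k) ↔ (∀ k, 0 ≤ (h + s.val) + dHeight t k) := by
  constructor
  · intro H k
    have := H (k+1)
    rw [dHeight_cons] at this
    linarith
  · intro H k
    cases k with
    | zero => simpa [dHeight_zero] using hh
    | succ k =>
      rw [dHeight_cons]
      have := H k
      linarith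

lemma mcond_cons (h : ℤ) (hh : 0 ≤ h) (s : MStep) (t : List MStep) :
    (∀ k, 0 ≤ h + mHeight (s::t) k) ↔ (∀ k, 0 ≤ (h + s.val) + mHeight t k) := by
  constructor
  · intro H k
    have := H (k+1)
    rw [mHeight_cons] at this
    linarith
  · intro H k
    cases k with
    | zero => simpa [mHeight_zero] using hh
    | succ k =>
      rw [mHeight_cons]
      have := H k
      linarith

open Classical in
lemma dAux_eq (c : ℕ → ℚ) : ∀ (l : List DStep) (h : ℕ),
    dAux c h l =
      if ((∀ k, 0 ≤ (h:ℤ) + dHeight l k) ∧ (h:ℤ) + dHeight l l.length = 0) then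
        ∏ i ∈ Finset.range l.length,
          (match l.getD i DStep.up with
           | .up => (1:ℚ)
           | .down => c ((h:ℤ) + dHeight l (i+1)).toNat)
      else 0
  | [], h => by
    simp only [dHeight_nil, List.length_nil, Finset.range_zero, Finset.prod_empty, add_zero]
    by_cases h0 : h = 0 <;> simp [dAux, h0]
  | s :: t, h => by
    have hcond := dcond_cons (h:ℤ) (by positivity) s t
    have hend : ((h:ℤ) + dHeight (s::t) (s::t).length = 0)
        ↔ (((h:ℤ) + s.val) + dHeight t t.length = 0) := by
      rw [List.length_cons, dHeight_cons, add_assoc]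
    have hprod : (∏ i ∈ Finset.range (s::t).length,
        (match (s::t).getD i DStep.up with
         | .up => (1:ℚ)
         | .down => c ((h:ℤ) + dHeight (s::t) (i+1)).toNat))
      = (match s with
         | .up => (1:ℚ)
         | .down => c (((h:ℤ) + s.val)).toNat) *
        ∏ i ∈ Finset.range t.length,
          (match t.getD i DStep.up with
           | .up => (1:ℚ)
           | .down => c (((h:ℤ) + s.val) + dHeight t (i+1)).toNat) := by
      rw [List.length_cons, Finset.prod_range_succ', mul_comm]
      congr 1
      · cases s <;> simp [dHeight_cons, dHeight_zero]
      · apply Finset.prod_congr rfl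
        intro i _
        rw [List.getD_cons_succ, dHeight_cons, add_assoc]
    cases s with
    | up =>
      simp only [dAux]
      rw [dAux_eq c t (h+1), hprod]
      have e : ((h+1 : ℕ) : ℤ) = (h:ℤ) + DStep.up.val := by
        simp [DStep.val]
      rw [e]
      by_cases hC : ((∀ k, 0 ≤ ((h:ℤ) + DStep.up.val) + dHeight t k) ∧
          ((h:ℤ) + DStep.up.val) + dHeight t t.length = 0)
      · rw [if_pos hC, if_pos ⟨hcond.mpr hC.1, hend.mpr hC.2⟩]
        simp
      · rw [if_neg hC, if_neg (fun H => hC ⟨hcond.mp H.1, hend.mp H.2⟩)]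
    | down =>
      cases h with
      | zero =>
        simp only [dAux]
        rw [if_neg]
        rintro ⟨H, -⟩
        have := H 1
        rw [dHeight_cons, dHeight_zero] at this
        simp [DStep.val] at this
      | succ h' =>
        simp only [dAux]
        rw [dAux_eq c t h', hprod]
        have e : ((h' : ℕ) : ℤ) = ((h'+1 : ℕ):ℤ) + DStep.down.val := by
          simp [DStep.val]
        rw [e]
        by_cases hC : ((∀ k, 0 ≤ (((h'+1:ℕ):ℤ) + DStep.down.val) + dHeight t k) ∧
            (((h'+1:ℕ):ℤ) + DStep.down.val) + dHeight t t.length = 0)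
        · rw [if_pos hC, if_pos ⟨hcond.mpr hC.1, hend.mpr hC.2⟩]
          congr 1 <;> norm_num [DStep.val]
        · rw [if_neg hC, if_neg (fun H => hC ⟨hcond.mp H.1, hend.mp H.2⟩)]
          ring

open Classical in
lemma mAux_eq (b lam : ℕ → ℚ) : ∀ (l : List MStep) (h : ℕ),
    mAux b lam h l =
      if ((∀ k, 0 ≤ (h:ℤ) + mHeight l k) ∧ (h:ℤ) + mHeight l l.length = 0) then
        ∏ i ∈ Finset.range l.length,
          (match l.getD i MStep.up with
           | .up => (1:ℚ)
           | .flat => b ((h:ℤ) + mHeight l (i+1)).toNat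
           | .down => lam ((h:ℤ) + mHeight l (i+1)).toNat)
      else 0
  | [], h => by
    simp only [mHeight_nil, List.length_nil, Finset.range_zero, Finset.prod_empty, add_zero]
    by_cases h0 : h = 0 <;> simp [mAux, h0]
  | s :: t, h => by
    have hcond := mcond_cons (h:ℤ) (by positivity) s t
    have hend : ((h:ℤ) + mHeight (s::t) (s::t).length = 0)
        ↔ (((h:ℤ) + s.val) + mHeight t t.length = 0) := by
      rw [List.length_cons, mHeight_cons, add_assoc]
    have hprod : (∏ i ∈ Finset.range (s::t).length,
        (match (s::t).getD i MStep.up with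
         | .up => (1:ℚ)
         | .flat => b ((h:ℤ) + mHeight (s::t) (i+1)).toNat
         | .down => lam ((h:ℤ) + mHeight (s::t) (i+1)).toNat))
      = (match s with
         | .up => (1:ℚ)
         | .flat => b (((h:ℤ) + s.val)).toNat
         | .down => lam (((h:ℤ) + s.val)).toNat) *
        ∏ i ∈ Finset.range t.length,
          (match t.getD i MStep.up with
           | .up => (1:ℚ)
           | .flat => b (((h:ℤ) + s.val) + mHeight t (i+1)).toNat
           | .down => lam (((h:ℤ) + s.val) + mHeight t (i+1)).toNat) := by
      rw [List.length_cons, Finset.prod_range_succ', mul_comm]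
      congr 1
      · cases s <;> simp [mHeight_cons, mHeight_zero]
      · apply Finset.prod_congr rfl
        intro i _
        rw [List.getD_cons_succ, mHeight_cons, add_assoc]
    cases s with
    | up =>
      simp only [mAux]
      rw [mAux_eq b lam t (h+1), hprod]
      have e : ((h+1 : ℕ) : ℤ) = (h:ℤ) + MStep.up.val := by
        simp [MStep.val]
      rw [e]
      by_cases hC : ((∀ k, 0 ≤ ((h:ℤ) + MStep.up.val) + mHeight t k) ∧
          ((h:ℤ) + MStep.up.val) + mHeight t t.length = 0)
      · rw [if_pos hC, if_pos ⟨hcond.mpr hC.1, hend.mpr hC.2⟩]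
        simp
      · rw [if_neg hC, if_neg (fun H => hC ⟨hcond.mp H.1, hend.mp H.2⟩)]
    | flat =>
      simp only [mAux]
      rw [mAux_eq b lam t h, hprod]
      have e : ((h : ℕ) : ℤ) = (h:ℤ) + MStep.flat.val := by
        simp [MStep.val]
      rw [e]
      by_cases hC : ((∀ k, 0 ≤ (((h:ℕ):ℤ) + MStep.flat.val) + mHeight t k) ∧
          (((h:ℕ):ℤ) + MStep.flat.val) + mHeight t t.length = 0)
      · rw [if_pos hC, if_pos ⟨hcond.mpr hC.1, hend.mpr hC.2⟩]
        congr 1 <;> norm_num [MStep.val]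
      · rw [if_neg hC, if_neg (fun H => hC ⟨hcond.mp H.1, hend.mp H.2⟩)]
        ring
    | down =>
      cases h with
      | zero =>
        simp only [mAux]
        rw [if_neg]
        rintro ⟨H, -⟩
        have := H 1
        rw [mHeight_cons, mHeight_zero] at this
        simp [MStep.val] at this
      | succ h' =>
        simp only [mAux]
        rw [mAux_eq b lam t h', hprod]
        have e : ((h' : ℕ) : ℤ) = ((h'+1 : ℕ):ℤ) + MStep.down.val := by
          simp [MStep.val]
        rw [e]
        by_cases hC : ((∀ k, 0 ≤ (((h'+1:ℕ):ℤ) + MStep.down.val) + mHeight t k) ∧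
            (((h'+1:ℕ):ℤ) + MStep.down.val) + mHeight t t.length = 0)
        · rw [if_pos hC, if_pos ⟨hcond.mpr hC.1, hend.mpr hC.2⟩]
          congr 1 <;> norm_num [MStep.val]
        · rw [if_neg hC, if_neg (fun H => hC ⟨hcond.mp H.1, hend.mp H.2⟩)]
          ring

noncomputable def dS (c : ℕ → ℚ) (h n : ℕ) : ℚ :=
  ∑ f : Fin n → DStep, dAux c h (List.ofFn f)
noncomputable def mS (b lam : ℕ → ℚ) (h n : ℕ) : ℚ :=
  ∑ f : Fin n → MStep, mAux b lam h (List.ofFn f)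

lemma dS_congr (c : ℕ → ℚ) (a b n : ℕ) (e : a = b) : dS c a n = dS c b n := by rw [e]

lemma sum_ofFn_succ_d {M : Type*} [AddCommMonoid M] (n : ℕ) (F : List DStep → M) :
    ∑ f : Fin (n+1) → DStep, F (List.ofFn f)
      = ∑ p : DStep × (Fin n → DStep), F (p.1 :: List.ofFn p.2) :=
  (Fintype.sum_equiv (Fin.consEquiv fun _ => DStep)
    (fun p => F (p.1 :: List.ofFn p.2)) (fun f => F (List.ofFn f))
    (by intro p; simp [Fin.consEquiv, List.ofFn_succ])).symm

lemma sum_ofFn_succ_m {M : Type*} [AddCommMonoid M] (n : ℕ) (F : List MStep → M) :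
    ∑ f : Fin (n+1) → MStep, F (List.ofFn f)
      = ∑ p : MStep × (Fin n → MStep), F (p.1 :: List.ofFn p.2) :=
  (Fintype.sum_equiv (Fin.consEquiv fun _ => MStep)
    (fun p => F (p.1 :: List.ofFn p.2)) (fun f => F (List.ofFn f))
    (by intro p; simp [Fin.consEquiv, List.ofFn_succ])).symm

lemma univ_dstep (G : DStep → ℚ) : ∑ s : DStep, G s = G .up + G .down := by
  have h : (Finset.univ : Finset DStep) = {.up, .down} := by decide
  rw [h, Finset.sum_insert (by decide), Finset.sum_singleton]

lemma univ_mstep (G : MStep → ℚ) : ∑ s : MStep, G s = G .up + G .down + G .flat := by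
  have h : (Finset.univ : Finset MStep) = {.up, .down, .flat} := by decide
  rw [h, Finset.sum_insert (by decide), Finset.sum_insert (by decide),
    Finset.sum_singleton, add_assoc]

lemma dS_cons (c : ℕ → ℚ) (h n : ℕ) :
    dS c h (n+1) = (∑ f : Fin n → DStep, dAux c h (DStep.up :: List.ofFn f))
      + (∑ f : Fin n → DStep, dAux c h (DStep.down :: List.ofFn f)) := by
  rw [dS, sum_ofFn_succ_d, Fintype.sum_prod_type]
  exact univ_dstep _

lemma mS_cons (b lam : ℕ → ℚ) (h n : ℕ) :
    mS b lam h (n+1) = (∑ f : Fin n → MStep, mAux b lam h (MStep.up :: List.ofFn f))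
      + (∑ f : Fin n → MStep, mAux b lam h (MStep.down :: List.ofFn f))
      + (∑ f : Fin n → MStep, mAux b lam h (MStep.flat :: List.ofFn f)) := by
  rw [mS, sum_ofFn_succ_m, Fintype.sum_prod_type]
  exact univ_mstep _

lemma dS_zero (c : ℕ → ℚ) (h : ℕ) : dS c h 0 = if h = 0 then 1 else 0 := by
  rw [dS]
  have h1 : ∀ f : Fin 0 → DStep, dAux c h (List.ofFn f) = if h = 0 then 1 else 0 :=
    fun f => by simp [dAux]
  rw [Finset.sum_congr rfl (fun f _ => h1 f), Finset.sum_const]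
  simp

lemma mS_zero (b lam : ℕ → ℚ) (h : ℕ) : mS b lam h 0 = if h = 0 then 1 else 0 := by
  rw [mS]
  have h1 : ∀ f : Fin 0 → MStep, mAux b lam h (List.ofFn f) = if h = 0 then 1 else 0 :=
    fun f => by simp [mAux]
  rw [Finset.sum_congr rfl (fun f _ => h1 f), Finset.sum_const]
  simp

lemma dS_succ_zero (c : ℕ → ℚ) (n : ℕ) : dS c 0 (n+1) = dS c 1 n := by
  rw [dS_cons]
  simp [dAux, dS]

lemma dS_succ_pos (c : ℕ → ℚ) (h n : ℕ) :
    dS c (h+1) (n+1) = dS c (h+2) n + c h * dS c h n := by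
  rw [dS_cons]
  simp [dAux, dS, Finset.mul_sum]

lemma mS_succ_zero (b lam : ℕ → ℚ) (n : ℕ) :
    mS b lam 0 (n+1) = mS b lam 1 n + b 0 * mS b lam 0 n := by
  rw [mS_cons]
  simp [mAux, mS, Finset.mul_sum]

lemma mS_succ_pos (b lam : ℕ → ℚ) (h n : ℕ) :
    mS b lam (h+1) (n+1)
      = mS b lam (h+2) n + lam h * mS b lam h n + b (h+1) * mS b lam (h+1) n := by
  rw [mS_cons]
  simp [mAux, mS, Finset.mul_sum]

lemma key (c α β : ℕ → ℚ)
    (hα : ∀ m : ℕ, α m = c (2 * m) + c (2 * m + 1))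
    (hβ : ∀ m : ℕ, β m = c (2 * m + 1) * c (2 * m + 2)) :
    ∀ (n h : ℕ), dS c (2*h+1) (2*n+1) = c 0 * mS α β h n := by
  intro n
  induction n with
  | zero =>
    intro h
    rw [show (2*0+1 : ℕ) = 0+1 by norm_num]
    rw [dS_succ_pos c (2*h) 0, dS_zero, dS_zero, mS_zero]
    by_cases h0 : h = 0
    · simp [h0]
    · have e1 : 2*h+2 ≠ 0 := by omega
      have e2 : 2*h ≠ 0 := by omega
      simp [h0, e1, e2]
  | succ n ih =>
    intro h
    cases h with
    | zero =>
      rw [show (2*0+1 : ℕ) = 0+1 by norm_num]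
      rw [show (2*(n+1)+1 : ℕ) = ((2*n+1)+1)+1 by ring]
      rw [dS_succ_pos c 0 ((2*n+1)+1)]
      rw [dS_congr c (0+2) (1+1) ((2*n+1)+1) (by norm_num)]
      rw [dS_succ_pos c 1 (2*n+1), dS_succ_zero c (2*n+1)]
      have I1 : dS c (1+2) (2*n+1) = c 0 * mS α β 1 n := by
        rw [dS_congr c (1+2) (2*1+1) (2*n+1) (by norm_num)]; exact ih 1
      have I0 : dS c 1 (2*n+1) = c 0 * mS α β 0 n := by
        rw [dS_congr c 1 (2*0+1) (2*n+1) (by norm_num)]; exact ih 0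
      rw [I1, I0, mS_succ_zero α β n]
      have hA : α 0 = c 0 + c 1 := by rw [hα 0]
      rw [hA]
      ring
    | succ h' =>
      rw [show (2*(h'+1)+1 : ℕ) = (2*h'+2)+1 by ring]
      rw [show (2*(n+1)+1 : ℕ) = ((2*n+1)+1)+1 by ring]
      rw [dS_succ_pos c (2*h'+2) ((2*n+1)+1)]
      rw [dS_congr c (2*h'+2+2) ((2*h'+3)+1) ((2*n+1)+1) (by ring)]
      rw [dS_succ_pos c (2*h'+3) (2*n+1)]
      rw [dS_congr c (2*h'+2) ((2*h'+1)+1) ((2*n+1)+1) (by ring)]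
      rw [dS_succ_pos c (2*h'+1) (2*n+1)]
      have I2 : dS c (2*h'+3+2) (2*n+1) = c 0 * mS α β (h'+2) n := by
        rw [dS_congr c (2*h'+3+2) (2*(h'+2)+1) (2*n+1) (by ring)]; exact ih (h'+2)
      have I1 : dS c (2*h'+3) (2*n+1) = c 0 * mS α β (h'+1) n := by
        rw [dS_congr c (2*h'+3) (2*(h'+1)+1) (2*n+1) (by ring)]; exact ih (h'+1)
      rw [I2, I1, ih h', mS_succ_pos α β h' n]
      have hA : α (h'+1) = c (2*h'+2) + c (2*h'+3) := by
        rw [hα (h'+1), congrArg c (show 2*(h'+1) = 2*h'+2 by ring),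
          congrArg c (show 2*(h'+1)+1 = 2*h'+3 by ring)]
      have hB : β h' = c (2*h'+1) * c (2*h'+2) := hβ h'
      rw [hA, hB]
      ring

open Classical in
lemma dyckSum_eq_dS (n : ℕ) (c : ℕ → ℚ) : dyckSum n c = dS c 0 (2*n) := by
  rw [dyckSum, dS]
  apply Finset.sum_congr rfl
  intro f _
  rw [dAux_eq c (List.ofFn f) 0]
  refine if_congr ?_ ?_ rfl
  · simp [IsDyck]
  · unfold dWeight
    apply Finset.prod_congr rfl
    intro i _
    cases hgd : (List.ofFn f).getD i DStep.up <;> simp [hgd]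

open Classical in
lemma motSum_eq_mS (m : ℕ) (b lam : ℕ → ℚ) : motSum m b lam = mS b lam 0 m := by
  rw [motSum, mS]
  apply Finset.sum_congr rfl
  intro f _
  rw [mAux_eq b lam (List.ofFn f) 0]
  refine if_congr ?_ ?_ rfl
  · simp [IsMotzkin]
  · unfold mWeight
    apply Finset.prod_congr rfl
    intro i _
    cases hgd : (List.ofFn f).getD i MStep.up <;> simp [hgd]

/-- If `α m = c (2m) + c (2m+1)` and `β m = c (2m+1) * c (2m+2)`, then
`Dyck_n(c) = c 0 * Mot_{n-1}(α, β)` for all `n ≥ 1`. -/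
theorem dyck_eq_c0_mul_motzkin (c α β : ℕ → ℚ)
    (hα : ∀ m : ℕ, α m = c (2 * m) + c (2 * m + 1))
    (hβ : ∀ m : ℕ, β m = c (2 * m + 1) * c (2 * m + 2))
    (n : ℕ) (hn : 1 ≤ n) :
    dyckSum n c = c 0 * motSum (n - 1) α β := by
  obtain ⟨m, rfl⟩ : ∃ m, n = m + 1 := ⟨n - 1, (Nat.succ_pred_eq_of_pos hn).symm⟩
  rw [dyckSum_eq_dS, show 2*(m+1) = (2*m+1)+1 by ring, dS_succ_zero c (2*m+1)]
  rw [dS_congr c 1 (2*0+1) (2*m+1) (by norm_num), key c α β hα hβ m 0]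
  rw [show (m+1)-1 = m from rfl, motSum_eq_mS m α β]
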